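/- Let g ∈ ℝ with g ≠ 0 and m ∈ ℕ. A homogeneous polynomial p ∈ ℂ[z₁,z₂] of total degree m satisfies Q(g)p = m·p if and only if p is a scalar multiple of z₂^m. Hence the eigenvalue m of Q(g) restricted to homogeneous polynomials of degree m has geometric multiplicity 1. -/

import Mathlib

open MvPolynomial

/-- The Bargmann-space representation of `H(g) − 1`:
`Q(g)p = z₁·∂p/∂z₁ + z₂·∂p/∂z₂ + i g·z₂·∂p/∂z₁` on `ℂ[z₁,z₂]`
(`X 0` plays the role of `z₁` and `X 1` that of `z₂`). -/
noncomputable def Qop (g : ℝ) (p : MvPolynomial (Fin 2) ℂ) : MvPolynomial (Fin 2) ℂ :=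
  X 0 * pderiv 0 p + X 1 * pderiv 1 p + (Complex.I * (g : ℂ)) • (X 1 * pderiv 0 p)

lemma degree_fin2 (d : Fin 2 →₀ ℕ) : d.degree = d 0 + d 1 := by
  rw [Finsupp.degree_apply, Finset.sum_subset (Finset.subset_univ d.support)
    (fun i _ h => Finsupp.notMem_support_iff.mp h), Fin.sum_univ_two]

lemma X_mul_pderiv_monomial (i : Fin 2) (d : Fin 2 →₀ ℕ) (a : ℂ) :
    (X i : MvPolynomial (Fin 2) ℂ) * pderiv i (monomial d a) = monomial d (a * (d i : ℂ)) := by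
  rw [pderiv_monomial, X, monomial_mul, one_mul]
  by_cases hd : d i = 0
  · simp [hd]
  · have hsum : Finsupp.single i 1 + (d - Finsupp.single i 1) = d := by
      ext j
      rcases eq_or_ne j i with rfl | hj
      · simp only [Finsupp.add_apply, Finsupp.tsub_apply]
        simp [Finsupp.single_apply]
        omega
      · simp [Finsupp.single_apply, Ne.symm hj]
    rw [hsum]

lemma coeff_pderiv (i : Fin 2) (p : MvPolynomial (Fin 2) ℂ) (e : Fin 2 →₀ ℕ) :
    coeff e (pderiv i p) = ((e i : ℂ) + 1) * coeff (e + Finsupp.single i 1) p := by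
  induction p using MvPolynomial.induction_on' with
  | add p q hp hq => simp [hp, hq]; ring
  | monomial s a =>
    rw [pderiv_monomial, coeff_monomial, coeff_monomial]
    by_cases hs : s = e + Finsupp.single i 1
    · subst hs
      rw [if_pos (add_tsub_cancel_right _ _), if_pos rfl]
      simp [Finsupp.single_apply]
      ring
    · rw [if_neg hs, mul_zero]
      split_ifs with h
      · by_cases h0 : s i = 0
        · simp [h0]
        · exfalso
          apply hs
          ext j
          have hj := DFunLike.congr_fun h j
          rw [Finsupp.tsub_apply] at hj
          rw [Finsupp.add_apply]
          by_cases hji : j = i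
          · subst hji
            rw [Finsupp.single_apply, if_pos rfl] at hj ⊢
            omega
          · rw [Finsupp.single_apply, if_neg (Ne.symm hji)] at hj ⊢
            omega
      · rfl

lemma euler_fin2 (m : ℕ) (p : MvPolynomial (Fin 2) ℂ) (hp : p.IsHomogeneous m) :
    X 0 * pderiv 0 p + X 1 * pderiv 1 p = (m : ℂ) • p := by
  conv_lhs => rw [p.as_sum]
  conv_rhs => rw [p.as_sum]
  rw [map_sum (pderiv 0), map_sum (pderiv 1), Finset.mul_sum, Finset.mul_sum, Finset.smul_sum,
    ← Finset.sum_add_distrib]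
  refine Finset.sum_congr rfl fun d hd => ?_
  rw [X_mul_pderiv_monomial, X_mul_pderiv_monomial, smul_monomial, ← map_add]
  congr 1
  have hdeg : d.degree = m := by
    rw [Finsupp.degree_eq_weight_one]
    exact hp (mem_support_iff.mp hd)
  rw [degree_fin2] at hdeg
  rw [← hdeg, smul_eq_mul]
  push_cast
  ring

/-- for `g ≠ 0`, a homogeneous polynomial `p` of degree `m` satisfies
`Q(g)p = m·p` iff `p` is a scalar multiple of `z₂^m`; hence the eigenvalue `m` of
`Q(g)` on homogeneous polynomials of degree `m` has geometric multiplicity 1. -/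
theorem Qop_eigenvector_iff (g : ℝ) (hg : g ≠ 0) (m : ℕ) (p : MvPolynomial (Fin 2) ℂ)
    (hp : p.IsHomogeneous m) :
    Qop g p = (m : ℂ) • p ↔ ∃ c : ℂ, p = c • (X 1 : MvPolynomial (Fin 2) ℂ) ^ m := by
  constructor
  · intro h
    have h3 : (Complex.I * (g : ℂ)) • (X 1 * pderiv 0 p) = 0 := by
      rw [Qop, euler_fin2 m p hp] at h
      exact add_eq_left.mp h
    have hIg : (Complex.I * (g : ℂ)) ≠ 0 :=
      mul_ne_zero Complex.I_ne_zero (by exact_mod_cast hg)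
    have h5 : pderiv 0 p = 0 := by
      rcases mul_eq_zero.mp ((smul_eq_zero.mp h3).resolve_left hIg) with h' | h'
      · exact absurd h' (X_ne_zero 1)
      · exact h'
    have hc0 : ∀ d : Fin 2 →₀ ℕ, d 0 ≠ 0 → coeff d p = 0 := by
      intro d hd
      have hcp := coeff_pderiv 0 p (d - Finsupp.single 0 1)
      rw [h5, coeff_zero] at hcp
      have hdd : (d - Finsupp.single 0 1) + Finsupp.single 0 1 = d := by
        ext j
        rcases eq_or_ne j 0 with rfl | hj
        · simp only [Finsupp.add_apply, Finsupp.tsub_apply]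
          simp [Finsupp.single_apply]
          omega
        · simp [Finsupp.single_apply, Ne.symm hj]
      rw [hdd] at hcp
      have hne : ((((d - Finsupp.single 0 1) : Fin 2 →₀ ℕ) 0 : ℂ) + 1) ≠ 0 :=
        Nat.cast_add_one_ne_zero _
      exact (mul_eq_zero.mp hcp.symm).resolve_left hne
    refine ⟨coeff (Finsupp.single 1 m) p, ?_⟩
    ext d
    rw [coeff_smul, X_pow_eq_monomial, coeff_monomial]
    by_cases hd : Finsupp.single 1 m = d
    · subst hd; simp
    · rw [if_neg hd, smul_zero]
      by_contra hne
      have hdeg : d.degree = m := by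
        rw [Finsupp.degree_eq_weight_one]
        exact hp hne
      rw [degree_fin2] at hdeg
      have hd0 : d 0 = 0 := by
        by_contra h0
        exact hne (hc0 d h0)
      apply hd
      ext j
      fin_cases j <;> simp [Finsupp.single_apply] <;> omega
  · rintro ⟨c, rfl⟩
    have h0 : pderiv 0 ((c • (X 1 : MvPolynomial (Fin 2) ℂ) ^ m)) = 0 := by
      simp [pderiv_pow, pderiv_X_of_ne (show (1 : Fin 2) ≠ 0 by decide)]
    rw [Qop, euler_fin2 m _ hp, h0]
    simp
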